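/- Let d ≥ 1, κ ∈ (0,1], L > 0, α > 0, C₀ > 0 and 0 < ρ̲ ≤ ρ̄. Let f₁, f₂ : ℝ^d → ℝ be (κ, L)-Hölder on the cube [0,1]^d, and let μ be a probability measure on [0,1]^d having a density p with respect to Lebesgue measure with ρ̲ ≤ p(x) ≤ ρ̄ for all x ∈ [0,1]^d. Assume the margin condition: μ{x ∈ [0,1]^d : 0 < |f₁(x) − f₂(x)| ≤ δ} ≤ C₀·δ^α for every δ ∈ (0,1]. If α·κ > 1, then either f₁(x) ≥ f₂(x) for every x ∈ [0,1]^d, or f₁(x) ≤ f₂(x) for every x ∈ [0,1]^d. -/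

import Mathlib

open MeasureTheory Set

private lemma rpow_one_div_pow {x κ : ℝ} (hx : 0 ≤ x) (hκ : 0 < κ) :
    (x ^ (1/κ)) ^ κ = x := by
  rw [← Real.rpow_mul hx, one_div_mul_cancel hκ.ne', Real.rpow_one]

private lemma continuousOn_of_holder {E : Type*} [SeminormedAddCommGroup E] {f : E → ℝ}
    {s : Set E} {C κ : ℝ} (hC : 0 < C) (hκ : 0 < κ)
    (H : ∀ x ∈ s, ∀ y ∈ s, |f x - f y| ≤ C * ‖x - y‖ ^ κ) : ContinuousOn f s := by
  intro x hx
  rw [Metric.continuousWithinAt_iff]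
  intro ε hε
  refine ⟨(ε / (2*C)) ^ (1/κ), Real.rpow_pos_of_pos (by positivity) _, fun {y} hy hyd => ?_⟩
  have h1 : ‖y - x‖ ≤ (ε/(2*C)) ^ (1/κ) := by
    rw [← dist_eq_norm]; exact hyd.le
  have hyx : ‖y - x‖ ^ κ ≤ ε/(2*C) := by
    calc ‖y - x‖ ^ κ ≤ ((ε/(2*C)) ^ (1/κ)) ^ κ :=
          Real.rpow_le_rpow (norm_nonneg _) h1 hκ.le
      _ = ε/(2*C) := rpow_one_div_pow (by positivity) hκ
  have := H y hy x hx
  rw [Real.dist_eq]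
  calc |f y - f x| ≤ C * ‖y - x‖ ^ κ := this
    _ ≤ C * (ε/(2*C)) := by nlinarith [Real.rpow_nonneg (norm_nonneg (y - x)) κ]
    _ < ε := by rw [mul_div_assoc']; rw [div_lt_iff₀ (by positivity)]; nlinarith

/-- 1-D level-set measure lower bound for a Hölder function crossing level δ/2. -/
private lemma oned_level_measure {h : ℝ → ℝ} {C κ δ : ℝ} (hC : 0 < C) (hκ0 : 0 < κ)
    (H : ∀ t ∈ Icc (0:ℝ) 1, ∀ t' ∈ Icc (0:ℝ) 1, |h t - h t'| ≤ C * |t - t'| ^ κ)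
    (h0 : h 0 < 0) (hδ : 0 < δ) (h1 : δ / 2 ≤ h 1)
    (hr : (δ / (4*C)) ^ (1/κ) ≤ 1/2) :
    ENNReal.ofReal ((δ / (4*C)) ^ (1/κ)) ≤
      volume {t : ℝ | t ∈ Icc (0:ℝ) 1 ∧ δ/4 ≤ h t ∧ h t ≤ 3*δ/4} := by
  set r := (δ / (4*C)) ^ (1/κ) with hrdef
  have hr0 : 0 < r := Real.rpow_pos_of_pos (by positivity) _
  have hcont : ContinuousOn h (Icc (0:ℝ) 1) := by
    apply continuousOn_of_holder hC hκ0
    intro x hx y hy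
    simpa [Real.norm_eq_abs] using H x hx y hy
  have hIVT := intermediate_value_Icc (by norm_num : (0:ℝ) ≤ 1) hcont
  obtain ⟨t₀, ht₀, ht₀v⟩ : ∃ t₀ ∈ Icc (0:ℝ) 1, h t₀ = δ/2 := by
    have : δ/2 ∈ Icc (h 0) (h 1) := ⟨by linarith, h1⟩
    obtain ⟨t₀, ht₀, hv⟩ := hIVT this
    exact ⟨t₀, ht₀, hv⟩
  have hrk : r ^ κ = δ / (4*C) := rpow_one_div_pow (by positivity) hκ0
  have key : ∀ t ∈ Icc (0:ℝ) 1, |t - t₀| ≤ r → δ/4 ≤ h t ∧ h t ≤ 3*δ/4 := by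
    intro t ht htr
    have hb : |h t - h t₀| ≤ C * |t - t₀| ^ κ := H t ht t₀ ht₀
    have h2 : |t - t₀| ^ κ ≤ r ^ κ := Real.rpow_le_rpow (abs_nonneg _) htr hκ0.le
    have h3 : |h t - h t₀| ≤ δ/4 := by
      rw [hrk] at h2
      calc |h t - h t₀| ≤ C * |t - t₀| ^ κ := hb
        _ ≤ C * (δ/(4*C)) := by nlinarith
        _ = δ/4 := by field_simp
    rw [ht₀v] at h3
    have := abs_le.1 h3
    constructor <;> linarith [this.1, this.2]
  rcases le_or_gt t₀ (1/2) with hc | hc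
  · have hsub : Icc t₀ (t₀ + r) ⊆
        {t : ℝ | t ∈ Icc (0:ℝ) 1 ∧ δ/4 ≤ h t ∧ h t ≤ 3*δ/4} := by
      intro t ht
      have htI : t ∈ Icc (0:ℝ) 1 := ⟨le_trans ht₀.1 ht.1, by linarith [ht.2]⟩
      refine ⟨htI, key t htI ?_⟩
      rw [abs_le]; constructor <;> linarith [ht.1, ht.2]
    calc ENNReal.ofReal r = volume (Icc t₀ (t₀ + r)) := by
          rw [Real.volume_Icc]; congr 1; ring
      _ ≤ _ := measure_mono hsub
  · have hsub : Icc (t₀ - r) t₀ ⊆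
        {t : ℝ | t ∈ Icc (0:ℝ) 1 ∧ δ/4 ≤ h t ∧ h t ≤ 3*δ/4} := by
      intro t ht
      have htI : t ∈ Icc (0:ℝ) 1 := ⟨by linarith [ht.1], le_trans ht.2 ht₀.2⟩
      refine ⟨htI, key t htI ?_⟩
      rw [abs_le]; constructor <;> linarith [ht.1, ht.2]
    calc ENNReal.ofReal r = volume (Icc (t₀ - r) t₀) := by
          rw [Real.volume_Icc]; congr 1; ring
      _ ≤ _ := measure_mono hsub

/-- Volume lower bound for the level tube of `g` inside the unit cube. -/
private lemma cube_level_volume {n : ℕ} {g : (Fin (n+1) → ℝ) → ℝ} {C κ : ℝ}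
    (hC : 0 < C) (hκ0 : 0 < κ)
    (Hg : ∀ x ∈ Icc (0:Fin (n+1) → ℝ) 1, ∀ y ∈ Icc (0:Fin (n+1) → ℝ) 1,
      |g x - g y| ≤ C * ‖x - y‖ ^ κ)
    {xm xp : Fin (n+1) → ℝ} {m : ℝ} (hm : 0 < m)
    (hxm : ∀ j, xm j ∈ Icc m (1 - m)) (hxp : ∀ j, xp j ∈ Icc m (1 - m))
    {η : ℝ} (hη0 : 0 < η) (hηm : η ≤ m)
    {a : ℝ} (ha : 0 < a)
    (hgm : ∀ w : Fin (n+1) → ℝ, (∀ j, w j ∈ Icc (0:ℝ) η) → g (xm + w) < 0)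
    (hgp : ∀ w : Fin (n+1) → ℝ, (∀ j, w j ∈ Icc (0:ℝ) η) → a ≤ g (xp + w))
    (i : Fin (n+1)) (hui : xp i - xm i ≠ 0)
    {δ : ℝ} (hδ0 : 0 < δ) (hδa : δ ≤ a) (hrhalf : (δ/(4*C))^(1/κ) ≤ 1/2) :
    ENNReal.ofReal (|xp i - xm i| * η^n * (δ/(4*C))^(1/κ)) ≤
      volume {x : Fin (n+1) → ℝ | x ∈ Icc 0 1 ∧ δ/4 ≤ g x ∧ g x ≤ 3*δ/4} := by
  set u : Fin (n+1) → ℝ := xp - xm with hu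
  set r : ℝ := (δ/(4*C))^(1/κ) with hrdef
  have hr0 : 0 < r := Real.rpow_pos_of_pos (by positivity) _
  have hm1 : m ≤ 1 - m := le_trans (hxm 0).1 (hxm 0).2
  -- linear map A y = y + y i • (u - Pi.single i 1)
  set A : (Fin (n+1) → ℝ) →ₗ[ℝ] (Fin (n+1) → ℝ) :=
    LinearMap.id + (LinearMap.proj i).smulRight (u - Pi.single i 1) with hA
  have hAapp : ∀ y, A y = y + y i • (u - Pi.single i 1) := by
    intro y; simp [hA, LinearMap.smulRight_apply]
  -- determinant
  have hdet : LinearMap.det A = u i := by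
    have hM : LinearMap.toMatrix' A
        = (1 : Matrix (Fin (n+1)) (Fin (n+1)) ℝ).updateCol i u := by
      ext j k
      rw [LinearMap.toMatrix'_apply, hAapp]
      simp only [Pi.add_apply, Pi.smul_apply, Pi.sub_apply, smul_eq_mul,
        Matrix.updateCol_apply, Matrix.one_apply, Pi.single_apply]
      rcases eq_or_ne k i with hk | hk
      · subst hk
        rcases eq_or_ne j k with hj | hj
        · subst hj; simp
        · simp [hj]
      · rcases eq_or_ne j k with hj | hj
        · subst hj; simp [hk, Ne.symm hk]
        · simp [hj, hk, Ne.symm hk]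
    have hu' : (fun k => ∑ j, u j • (1 : Matrix (Fin (n+1)) (Fin (n+1)) ℝ) k j) = u := by
      funext k
      simp [Matrix.one_apply, Finset.sum_ite_eq]
    have := Matrix.det_updateCol_sum (1 : Matrix (Fin (n+1)) (Fin (n+1)) ℝ) i u
    rw [hu'] at this
    rw [← LinearMap.det_toMatrix', hM, this, Matrix.det_one, smul_eq_mul, mul_one]
  -- measurable equiv
  set e := MeasurableEquiv.piFinSuccAbove (fun _ : Fin (n+1) => ℝ) i with he
  have hesymm : ∀ q : ℝ × (Fin n → ℝ), e.symm q = i.insertNth q.1 q.2 := by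
    intro q
    simp [he, MeasurableEquiv.piFinSuccAbove_symm_apply, Fin.insertNthEquiv]
  set F : ℝ × (Fin n → ℝ) → (Fin (n+1) → ℝ) := fun q => xm + A (e.symm q) with hFdef
  have hF : ∀ (t : ℝ) (s : Fin n → ℝ), F (t, s) = xm + (t • u + i.insertNth 0 s) := by
    intro t s
    have h1 : e.symm (t, s) = i.insertNth t s := hesymm (t, s)
    rw [hFdef]; simp only [h1, hAapp]
    congr 1
    funext j
    refine Fin.succAboveCases i ?_ ?_ j
    · simp [Fin.insertNth_apply_same, Pi.single_apply]
      ring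
    · intro j'
      have hne : i.succAbove j' ≠ i := Fin.succAbove_ne i j'
      simp [Fin.insertNth_apply_succAbove, Pi.single_apply, hne]
      ring
  -- insertNth 0 s coordinates in [0, η]
  have hVmem : ∀ s : Fin n → ℝ, (∀ j, s j ∈ Icc (0:ℝ) η) →
      ∀ j, (Fin.insertNth (α := fun _ => ℝ) i 0 s) j ∈ Icc (0:ℝ) η := by
    intro s hs j
    rcases eq_or_ne j i with rfl | hj
    · simp; exact hη0.le
    · obtain ⟨j', rfl⟩ := Fin.exists_succAbove_eq hj
      simpa using hs j'
  -- geometry: F q in cube for q in K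
  have humem : ∀ j, |u j| ≤ 1 := by
    intro j
    have h1 := hxm j; have h2 := hxp j
    rw [hu]; simp only [Pi.sub_apply]
    rw [abs_le]
    constructor <;> nlinarith [h1.1, h1.2, h2.1, h2.2, hm]
  have hcube : ∀ (t : ℝ), t ∈ Icc (0:ℝ) 1 → ∀ (s : Fin n → ℝ), (∀ j, s j ∈ Icc (0:ℝ) η) →
      F (t, s) ∈ Icc (0 : Fin (n+1) → ℝ) 1 := by
    intro t ht s hs
    rw [hF]
    rw [Set.mem_Icc]
    constructor <;> intro j <;>
      · have h1 := hxm j; have h2 := hxp j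
        have h3 := hVmem s hs j
        simp only [Pi.add_apply, Pi.smul_apply, Pi.zero_apply, Pi.one_apply, smul_eq_mul,
          hu, Pi.sub_apply]
        nlinarith [h1.1, h1.2, h2.1, h2.2, h3.1, h3.2, ht.1, ht.2, hm, hηm]
  -- the level set S
  set S : Set (Fin (n+1) → ℝ) :=
    {x : Fin (n+1) → ℝ | x ∈ Icc 0 1 ∧ δ/4 ≤ g x ∧ g x ≤ 3*δ/4} with hS
  have hSclosed : IsClosed S := by
    have : S = Icc (0 : Fin (n+1) → ℝ) 1 ∩ g ⁻¹' (Icc (δ/4) (3*δ/4)) := by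
      ext x; simp [hS, Set.mem_Icc, and_assoc]
    rw [this]
    exact (continuousOn_of_holder hC hκ0 Hg).preimage_isClosed_of_isClosed
      isClosed_Icc isClosed_Icc
  have hFcont : Continuous F := by
    have h1 : Continuous fun q : ℝ × (Fin n → ℝ) => Fin.insertNth (α := fun _ => ℝ) i q.1 q.2 :=
      Continuous.finInsertNth (A := fun _ => ℝ) i continuous_fst continuous_snd
    have h2 : Continuous fun q : ℝ × (Fin n → ℝ) => A (e.symm q) := by
      have := A.continuous_of_finiteDimensional
      have heq : (fun q : ℝ × (Fin n → ℝ) => A (e.symm q))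
          = fun q : ℝ × (Fin n → ℝ) => A (i.insertNth q.1 q.2) := by
        funext q; rw [hesymm]
      rw [heq]
      exact this.comp h1
    exact continuous_const.add h2
  -- the box and Z
  set B : Set (Fin n → ℝ) := univ.pi fun _ => Icc (0:ℝ) η with hB
  set K : Set (ℝ × (Fin n → ℝ)) := Icc (0:ℝ) 1 ×ˢ B with hK
  set Z : Set (ℝ × (Fin n → ℝ)) := K ∩ F ⁻¹' S with hZ
  have hZmeas : MeasurableSet Z :=
    (measurableSet_Icc.prod (MeasurableSet.univ_pi fun _ => measurableSet_Icc)).inter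
      (hSclosed.measurableSet.preimage hFcont.measurable)
  -- slice bound
  have hslice : ∀ s : Fin n → ℝ, (∀ j, s j ∈ Icc (0:ℝ) η) →
      ENNReal.ofReal r ≤ volume ((fun t => (t, s)) ⁻¹' Z) := by
    intro s hs
    set h : ℝ → ℝ := fun t => g (F (t, s)) with hh
    have hH : ∀ t ∈ Icc (0:ℝ) 1, ∀ t' ∈ Icc (0:ℝ) 1, |h t - h t'| ≤ C * |t - t'| ^ κ := by
      intro t ht t' ht'
      have hd : F (t, s) - F (t', s) = (t - t') • u := by
        rw [hF, hF]; funext j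
        simp only [Pi.add_apply, Pi.smul_apply, Pi.sub_apply, smul_eq_mul]
        ring
      have hnorm : ‖F (t, s) - F (t', s)‖ ≤ |t - t'| := by
        rw [hd, norm_smul]
        have : ‖u‖ ≤ 1 := by
          apply pi_norm_le_iff_of_nonneg zero_le_one |>.2
          intro j; rw [Real.norm_eq_abs]; exact humem j
        calc ‖t - t'‖ * ‖u‖ ≤ ‖t - t'‖ * 1 :=
              mul_le_mul_of_nonneg_left this (norm_nonneg _)
          _ = |t - t'| := by rw [mul_one, Real.norm_eq_abs]
      calc |h t - h t'| ≤ C * ‖F (t, s) - F (t', s)‖ ^ κ :=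
            Hg _ (hcube t ht s hs) _ (hcube t' ht' s hs)
        _ ≤ C * |t - t'| ^ κ := by
            have := Real.rpow_le_rpow (norm_nonneg _) hnorm hκ0.le
            nlinarith
    have hh0 : h 0 < 0 := by
      have : F (0, s) = xm + i.insertNth 0 s := by rw [hF]; simp
      rw [hh]; simp only [this]
      exact hgm _ (hVmem s hs)
    have hh1 : δ/2 ≤ h 1 := by
      have hxmu : xm + (u + i.insertNth 0 s) = xp + i.insertNth 0 s := by
        rw [hu]; funext j; simp only [Pi.add_apply, Pi.sub_apply]; ring
      have : F (1, s) = xp + i.insertNth 0 s := by rw [hF]; simp only [one_smul]; rw [hxmu]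
      rw [hh]; simp only [this]
      have := hgp _ (hVmem s hs)
      linarith
    have hmain := oned_level_measure hC hκ0 hH hh0 hδ0 hh1 hrhalf
    refine le_trans hmain (measure_mono ?_)
    intro t ht
    obtain ⟨htI, hlev⟩ := ht
    have hFin : F (t, s) ∈ S := ⟨hcube t htI s hs, hlev⟩
    exact ⟨⟨htI, fun j _ => hs j⟩, hFin⟩
  -- volume of Z
  have hZvol : ENNReal.ofReal r * ENNReal.ofReal (η^n) ≤ volume Z := by
    rw [Measure.volume_eq_prod, Measure.prod_apply_symm hZmeas]
    have hBvol : volume B = ENNReal.ofReal (η^n) := by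
      rw [hB, volume_pi_pi]
      simp [Real.volume_Icc, ENNReal.ofReal_pow hη0.le]
    calc ENNReal.ofReal r * ENNReal.ofReal (η^n)
        = ∫⁻ s, B.indicator (fun _ => ENNReal.ofReal r) s ∂volume := by
          rw [lintegral_indicator (MeasurableSet.univ_pi fun _ => measurableSet_Icc)]
          rw [setLIntegral_const, hBvol]
      _ ≤ ∫⁻ s, volume ((fun t => (t, s)) ⁻¹' Z) ∂volume := by
          apply lintegral_mono
          intro s
          by_cases hsB : s ∈ B
          · rw [Set.indicator_of_mem hsB]
            exact hslice s (fun j => hsB j (mem_univ j))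
          · rw [Set.indicator_of_notMem hsB]; exact zero_le
  -- image computation
  have himg : volume (F '' Z) = ENNReal.ofReal |u i| * volume Z := by
    have h1 : F '' Z = (fun x => xm + x) '' (⇑A '' (⇑e.symm '' Z)) := by
      rw [Set.image_image, Set.image_image]
    rw [h1, Set.image_add_left, measure_preimage_add,
      Measure.addHaar_image_linearMap, hdet]
    congr 1
    have h2 : ⇑e.symm '' Z = ⇑e ⁻¹' Z := by
      ext y
      simp only [Set.mem_image, Set.mem_preimage]
      constructor
      · rintro ⟨z, hz, rfl⟩; simpa using hz
      · intro hy; exact ⟨e y, hy, by simp⟩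
    rw [h2]
    exact (volume_preserving_piFinSuccAbove (fun _ : Fin (n+1) => ℝ) i).measure_preimage
      hZmeas.nullMeasurableSet
  have hFZS : F '' Z ⊆ S := Set.image_subset_iff.2 fun q hq => hq.2
  -- combine
  have hui' : u i = xp i - xm i := by rw [hu]; simp
  calc ENNReal.ofReal (|xp i - xm i| * η^n * r)
      = ENNReal.ofReal |u i| * (ENNReal.ofReal r * ENNReal.ofReal (η^n)) := by
        rw [← ENNReal.ofReal_mul (by positivity), ← ENNReal.ofReal_mul (abs_nonneg _), hui']
        congr 1; ring
    _ ≤ ENNReal.ofReal |u i| * volume Z :=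
        mul_le_mul_right hZvol _
    _ = volume (F '' Z) := himg.symm
    _ ≤ volume S := measure_mono hFZS

set_option maxHeartbeats 1000000 in
/-- **Margin condition and smoothness, Part 1.** If `f₁, f₂` are `(κ, L)`-Hölder on the
cube `[0,1]^d` (sup norm), the covariate distribution `μ` is a probability measure on
`[0,1]^d` with a density `p` bounded between `ρ̲` and `ρ̄` with respect to Lebesgue
measure, the margin condition holds with exponent `α`, and `α · κ > 1`, then one of the
two actions is everywhere (weakly) optimal on `[0,1]^d`. -/
theorem margin_smoothness_one_action_optimal
    (d : ℕ) (hd : 1 ≤ d) (κ L α C₀ ρlo ρhi : ℝ)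
    (hκ0 : 0 < κ) (hκ1 : κ ≤ 1) (hL : 0 < L) (hα : 0 < α) (hC₀ : 0 < C₀)
    (hρlo : 0 < ρlo) (hρ : ρlo ≤ ρhi)
    (f₁ f₂ : (Fin d → ℝ) → ℝ)
    (hf₁ : ∀ x ∈ Set.Icc (0 : Fin d → ℝ) 1, ∀ y ∈ Set.Icc (0 : Fin d → ℝ) 1,
      |f₁ x - f₁ y| ≤ L * ‖x - y‖ ^ κ)
    (hf₂ : ∀ x ∈ Set.Icc (0 : Fin d → ℝ) 1, ∀ y ∈ Set.Icc (0 : Fin d → ℝ) 1,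
      |f₂ x - f₂ y| ≤ L * ‖x - y‖ ^ κ)
    (p : (Fin d → ℝ) → ℝ)
    (hp : ∀ x ∈ Set.Icc (0 : Fin d → ℝ) 1, ρlo ≤ p x ∧ p x ≤ ρhi)
    (μ : Measure (Fin d → ℝ)) (hμprob : IsProbabilityMeasure μ)
    (hdens : μ = (volume.restrict (Set.Icc (0 : Fin d → ℝ) 1)).withDensity
      (fun x => ENNReal.ofReal (p x)))
    (hmargin : ∀ δ ∈ Set.Ioc (0 : ℝ) 1,
      μ {x ∈ Set.Icc (0 : Fin d → ℝ) 1 | 0 < |f₁ x - f₂ x| ∧ |f₁ x - f₂ x| ≤ δ}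
        ≤ ENNReal.ofReal (C₀ * δ ^ α))
    (hακ : 1 < α * κ) :
    (∀ x ∈ Set.Icc (0 : Fin d → ℝ) 1, f₂ x ≤ f₁ x) ∨
    (∀ x ∈ Set.Icc (0 : Fin d → ℝ) 1, f₁ x ≤ f₂ x) := by
  obtain ⟨n, rfl⟩ : ∃ n, d = n + 1 := ⟨d - 1, (Nat.succ_pred_eq_of_pos hd).symm⟩
  by_contra hcon
  push_neg at hcon
  obtain ⟨⟨zm, hzmQ, hzm⟩, ⟨zp, hzpQ, hzp⟩⟩ := hcon
  -- g = f₁ - f₂ ; g zm < 0 < g zp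
  set Q : Set (Fin (n+1) → ℝ) := Set.Icc 0 1 with hQdef
  set g : (Fin (n+1) → ℝ) → ℝ := fun x => f₁ x - f₂ x with hgdef
  have Hg : ∀ x ∈ Q, ∀ y ∈ Q, |g x - g y| ≤ (2*L) * ‖x - y‖ ^ κ := by
    intro x hx y hy
    have h1 := hf₁ x hx y hy
    have h2 := hf₂ x hx y hy
    have h3 : |g x - g y| ≤ |f₁ x - f₁ y| + |f₂ x - f₂ y| := by
      have : g x - g y = (f₁ x - f₁ y) - (f₂ x - f₂ y) := by rw [hgdef]; ring
      rw [this]; exact abs_sub _ _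
    linarith
  -- basic coordinate facts
  have hcoord : ∀ z ∈ Q, ∀ j, 0 ≤ z j ∧ z j ≤ 1 := by
    intro z hz j
    have h := Set.mem_Icc.1 hz
    exact ⟨h.1 j, h.2 j⟩
  set a₀ : ℝ := min (f₂ zm - f₁ zm) (f₁ zp - f₂ zp) with ha₀def
  have ha₀ : 0 < a₀ := lt_min (by linarith) (by linarith)
  have hgzm : g zm ≤ -a₀ := by
    have := min_le_left (f₂ zm - f₁ zm) (f₁ zp - f₂ zp); rw [hgdef]; simp; linarith
  have hgzp : a₀ ≤ g zp := by
    have := min_le_right (f₂ zm - f₁ zm) (f₁ zp - f₂ zp); rw [hgdef]; simp; linarith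
  clear_value a₀ g
  -- shrink parameter
  set θ : ℝ := min 1 ((a₀/(16*L))^(1/κ)) with hθdef
  have hθ0 : 0 < θ := lt_min one_pos (Real.rpow_pos_of_pos (by positivity) _)
  have hθ1 : θ ≤ 1 := min_le_left _ _
  have hθκ : θ ^ κ ≤ a₀/(16*L) := by
    calc θ ^ κ ≤ ((a₀/(16*L))^(1/κ)) ^ κ :=
          Real.rpow_le_rpow hθ0.le (min_le_right _ _) hκ0.le
      _ = a₀/(16*L) := rpow_one_div_pow (by positivity) hκ0
  set m : ℝ := θ/2 with hmdef
  have hm : 0 < m := by positivity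
  have hm2 : 2*m = θ := by rw [hmdef]; ring
  clear_value θ m
  -- interior points
  set xm : Fin (n+1) → ℝ := fun j => zm j + θ * (1/2 - zm j) with hxmdef
  set xp : Fin (n+1) → ℝ := fun j => zp j + θ * (1/2 - zp j) with hxpdef
  clear_value xm xp
  have hxmIcc : ∀ j, xm j ∈ Icc m (1 - m) := by
    intro j
    obtain ⟨h1, h2⟩ := hcoord zm hzmQ j
    constructor <;> (rw [hxmdef, hmdef]; simp only) <;> nlinarith
  have hxpIcc : ∀ j, xp j ∈ Icc m (1 - m) := by
    intro j
    obtain ⟨h1, h2⟩ := hcoord zp hzpQ j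
    constructor <;> (rw [hxpdef, hmdef]; simp only) <;> nlinarith
  have hIccQ : ∀ z : Fin (n+1) → ℝ, (∀ j, z j ∈ Icc m (1-m)) → z ∈ Q := by
    intro z hz
    rw [hQdef, Set.mem_Icc]
    have hm1 : m ≤ 1 - m := by rw [hmdef]; nlinarith
    constructor <;> intro j <;>
      [exact le_trans hm.le (hz j).1; exact le_trans (hz j).2 (by simp; positivity)]
  have hxmQ : xm ∈ Q := hIccQ xm hxmIcc
  have hxpQ : xp ∈ Q := hIccQ xp hxpIcc
  -- values at interior points
  have hnear : ∀ z ∈ Q, ∀ x ∈ Q, ‖x - z‖ ≤ θ → |g x - g z| ≤ a₀/8 := by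
    intro z hz x hx hnorm
    have h1 := Hg x hx z hz
    have h2 : ‖x - z‖ ^ κ ≤ θ ^ κ := Real.rpow_le_rpow (norm_nonneg _) hnorm hκ0.le
    calc |g x - g z| ≤ (2*L) * ‖x - z‖ ^ κ := h1
      _ ≤ (2*L) * (a₀/(16*L)) := by nlinarith
      _ = a₀/8 := by field_simp; ring
  have hxmnorm : ‖xm - zm‖ ≤ θ := by
    apply pi_norm_le_iff_of_nonneg hθ0.le |>.2
    intro j
    obtain ⟨h1, h2⟩ := hcoord zm hzmQ j
    have hc : (xm - zm) j = θ * (1/2 - zm j) := by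
      simp only [Pi.sub_apply, hxmdef]; ring
    rw [Real.norm_eq_abs, hc, abs_le]
    constructor <;> nlinarith
  have hxpnorm : ‖xp - zp‖ ≤ θ := by
    apply pi_norm_le_iff_of_nonneg hθ0.le |>.2
    intro j
    obtain ⟨h1, h2⟩ := hcoord zp hzpQ j
    have hc : (xp - zp) j = θ * (1/2 - zp j) := by
      simp only [Pi.sub_apply, hxpdef]; ring
    rw [Real.norm_eq_abs, hc, abs_le]
    constructor <;> nlinarith
  have hgxm : g xm ≤ -(7/8)*a₀ := by
    have := hnear zm hzmQ xm hxmQ hxmnorm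
    have := abs_le.1 this
    linarith [this.1, this.2]
  have hgxp : (7/8)*a₀ ≤ g xp := by
    have := hnear zp hzpQ xp hxpQ hxpnorm
    have := abs_le.1 this
    linarith [this.1, this.2]
  -- perturbation budget
  set η : ℝ := min m ((a₀/(16*L))^(1/κ)) with hηdef
  have hη0 : 0 < η := lt_min hm (Real.rpow_pos_of_pos (by positivity) _)
  have hηm : η ≤ m := min_le_left _ _
  have hηκ : η ^ κ ≤ a₀/(16*L) := by
    calc η ^ κ ≤ ((a₀/(16*L))^(1/κ)) ^ κ :=
          Real.rpow_le_rpow hη0.le (min_le_right _ _) hκ0.le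
      _ = a₀/(16*L) := rpow_one_div_pow (by positivity) hκ0
  clear_value η
  have hwQ : ∀ z : Fin (n+1) → ℝ, (∀ j, z j ∈ Icc m (1-m)) →
      ∀ w : Fin (n+1) → ℝ, (∀ j, w j ∈ Icc (0:ℝ) η) → z + w ∈ Q := by
    intro z hz w hw
    rw [hQdef, Set.mem_Icc]
    constructor <;> intro j <;>
      · have h1 := hz j
        have h2 := hw j
        simp only [Pi.add_apply, Pi.zero_apply, Pi.one_apply]
        have := h1.1; have := h1.2; have := h2.1; have := h2.2
        nlinarith
  have hwnorm : ∀ w : Fin (n+1) → ℝ, (∀ j, w j ∈ Icc (0:ℝ) η) → ‖w‖ ≤ η := by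
    intro w hw
    apply pi_norm_le_iff_of_nonneg hη0.le |>.2
    intro j
    rw [Real.norm_eq_abs, abs_le]
    exact ⟨by linarith [(hw j).1, hη0.le], (hw j).2⟩
  have hpert : ∀ z ∈ Q, ∀ w : Fin (n+1) → ℝ, (∀ j, w j ∈ Icc (0:ℝ) η) →
      z + w ∈ Q → |g (z + w) - g z| ≤ a₀/8 := by
    intro z hz w hw hzw
    have h1 := Hg (z + w) hzw z hz
    have h2 : ‖z + w - z‖ ≤ η := by
      have : z + w - z = w := by ring
      rw [this]; exact hwnorm w hw
    have h3 : ‖z + w - z‖ ^ κ ≤ η ^ κ := Real.rpow_le_rpow (norm_nonneg _) h2 hκ0.le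
    calc |g (z + w) - g z| ≤ (2*L) * ‖z + w - z‖ ^ κ := h1
      _ ≤ (2*L) * (a₀/(16*L)) := by nlinarith
      _ = a₀/8 := by field_simp; ring
  have hgm : ∀ w : Fin (n+1) → ℝ, (∀ j, w j ∈ Icc (0:ℝ) η) → g (xm + w) < 0 := by
    intro w hw
    have hQ' := hwQ xm hxmIcc w hw
    have := abs_le.1 (hpert xm hxmQ w hw hQ')
    linarith [this.1, this.2]
  have hgp : ∀ w : Fin (n+1) → ℝ, (∀ j, w j ∈ Icc (0:ℝ) η) → a₀/2 ≤ g (xp + w) := by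
    intro w hw
    have hQ' := hwQ xp hxpIcc w hw
    have := abs_le.1 (hpert xp hxpQ w hw hQ')
    linarith [this.1, this.2]
  -- choose a coordinate where xm and xp differ
  have hxmne : xm ≠ xp := by
    intro h
    rw [h] at hgxm
    linarith
  obtain ⟨i, hi⟩ := Function.ne_iff.1 hxmne
  have hui : xp i - xm i ≠ 0 := sub_ne_zero.2 (Ne.symm hi)
  -- δ₀ and the per-δ inequality
  set δ₀ : ℝ := min (min (a₀/2) 1) ((8*L) * ((1/2:ℝ))^κ) with hδ₀def
  have hδ₀ : 0 < δ₀ :=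
    lt_min (lt_min (by positivity) one_pos) (by positivity)
  have hδ₀a : δ₀ ≤ a₀/2 := le_trans (min_le_left _ _) (min_le_left _ _)
  have hδ₀1 : δ₀ ≤ 1 := le_trans (min_le_left _ _) (min_le_right _ _)
  have hδ₀L : δ₀ ≤ (8*L) * ((1/2:ℝ))^κ := min_le_right _ _
  clear_value δ₀
  set K : ℝ := ρlo * (|xp i - xm i| * η^n) with hKdef
  have hK : 0 < K := by
    rw [hKdef]
    have : 0 < |xp i - xm i| := abs_pos.2 hui
    positivity
  clear_value K
  have claim : ∀ δ : ℝ, 0 < δ → δ ≤ δ₀ → K * ((δ/(8*L))^(1/κ)) ≤ C₀ * δ^α := by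
    intro δ hδ hδle
    have hδa : δ ≤ a₀/2 := le_trans hδle hδ₀a
    have hδ1 : δ ≤ 1 := le_trans hδle hδ₀1
    have h8L : (4*(2*L)) = 8*L := by ring
    have hrhalf : (δ/(4*(2*L)))^(1/κ) ≤ 1/2 := by
      have h1 : δ ≤ (8*L) * ((1/2:ℝ))^κ := le_trans hδle hδ₀L
      have h2 : δ/(4*(2*L)) ≤ ((1/2:ℝ))^κ := by
        rw [h8L, div_le_iff₀ (by positivity)]
        calc δ ≤ (8*L) * ((1/2:ℝ))^κ := h1
          _ = ((1/2:ℝ))^κ * (8*L) := by ring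
      calc (δ/(4*(2*L)))^(1/κ) ≤ (((1/2:ℝ))^κ)^(1/κ) :=
            Real.rpow_le_rpow (by positivity) h2 (by positivity)
        _ = 1/2 := by
            rw [← Real.rpow_mul (by norm_num), mul_one_div, div_self hκ0.ne',
              Real.rpow_one]
    have hvol := cube_level_volume (by positivity : (0:ℝ) < 2*L) hκ0 Hg hm hxmIcc hxpIcc
      hη0 hηm (by positivity : (0:ℝ) < a₀/2) hgm hgp i hui hδ hδa hrhalf
    set S : Set (Fin (n+1) → ℝ) :=
      {x : Fin (n+1) → ℝ | x ∈ Icc 0 1 ∧ δ/4 ≤ g x ∧ g x ≤ 3*δ/4} with hSdef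
    have hSQ : S ⊆ Q := fun x hx => hx.1
    have hSmeas : MeasurableSet S := by
      have : S = Icc (0 : Fin (n+1) → ℝ) 1 ∩ g ⁻¹' (Icc (δ/4) (3*δ/4)) := by
        ext x; simp [hSdef, Set.mem_Icc, and_assoc]
      rw [this]
      exact ((continuousOn_of_holder (by positivity : (0:ℝ) < 2*L) hκ0
        Hg).preimage_isClosed_of_isClosed isClosed_Icc isClosed_Icc).measurableSet
    have hμS : ENNReal.ofReal ρlo * volume S ≤ μ S := by
      rw [hdens, withDensity_apply _ hSmeas]
      have hle : ∀ x, S.indicator (fun _ => ENNReal.ofReal ρlo) x ≤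
          S.indicator (fun x => ENNReal.ofReal (p x)) x := by
        intro x
        by_cases hx : x ∈ S
        · rw [Set.indicator_of_mem hx, Set.indicator_of_mem hx]
          exact ENNReal.ofReal_le_ofReal (hp x (hSQ hx)).1
        · rw [Set.indicator_of_notMem hx, Set.indicator_of_notMem hx]
      calc ENNReal.ofReal ρlo * volume S
          = ENNReal.ofReal ρlo * (volume.restrict Q) S := by
            rw [Measure.restrict_apply hSmeas, Set.inter_eq_self_of_subset_left hSQ]
        _ = ∫⁻ x, S.indicator (fun _ => ENNReal.ofReal ρlo) x ∂(volume.restrict Q) := by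
            rw [lintegral_indicator hSmeas, setLIntegral_const]
        _ ≤ ∫⁻ x, S.indicator (fun x => ENNReal.ofReal (p x)) x ∂(volume.restrict Q) :=
            lintegral_mono hle
        _ = ∫⁻ x in S, ENNReal.ofReal (p x) ∂(volume.restrict Q) := by
            rw [lintegral_indicator hSmeas]
    have hsub : S ⊆ {x ∈ Set.Icc (0 : Fin (n+1) → ℝ) 1 |
        0 < |f₁ x - f₂ x| ∧ |f₁ x - f₂ x| ≤ δ} := by
      intro x hx
      obtain ⟨hxQ, hx1, hx2⟩ := hx
      have hgx : f₁ x - f₂ x = g x := by rw [hgdef]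
      refine ⟨hxQ, ?_, ?_⟩
      · rw [hgx, abs_of_pos (by linarith)]; linarith
      · rw [hgx, abs_of_pos (by linarith)]; linarith
    have hmar := hmargin δ ⟨hδ, hδ1⟩
    have hchain : ENNReal.ofReal (K * ((δ/(4*(2*L)))^(1/κ))) ≤
        ENNReal.ofReal (C₀ * δ^α) := by
      calc ENNReal.ofReal (K * ((δ/(4*(2*L)))^(1/κ)))
          = ENNReal.ofReal ρlo *
            ENNReal.ofReal (|xp i - xm i| * η^n * ((δ/(4*(2*L)))^(1/κ))) := by
            rw [← ENNReal.ofReal_mul hρlo.le, hKdef]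
            congr 1; ring
        _ ≤ ENNReal.ofReal ρlo * volume S := mul_le_mul_right hvol _
        _ ≤ μ S := hμS
        _ ≤ μ {x ∈ Set.Icc (0 : Fin (n+1) → ℝ) 1 |
              0 < |f₁ x - f₂ x| ∧ |f₁ x - f₂ x| ≤ δ} := measure_mono hsub
        _ ≤ ENNReal.ofReal (C₀ * δ^α) := hmar
    have := (ENNReal.ofReal_le_ofReal_iff (by positivity)).1 hchain
    calc K * ((δ/(8*L))^(1/κ)) = K * ((δ/(4*(2*L)))^(1/κ)) := by rw [h8L]
      _ ≤ C₀ * δ^α := this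
  -- final contradiction
  set ε : ℝ := α - 1/κ with hεdef
  have hε : 0 < ε := by
    rw [hεdef]
    have : 1/κ < α := by
      rw [div_lt_iff₀ hκ0]
      linarith [hακ]
    linarith
  set K' : ℝ := K / ((8*L)^(1/κ)) with hK'def
  have hK' : 0 < K' := by
    rw [hK'def]
    have : (0:ℝ) < (8*L)^(1/κ) := Real.rpow_pos_of_pos (by positivity) _
    positivity
  set δ' : ℝ := min δ₀ (min 1 ((K'/(2*C₀))^(1/ε))) with hδ'def
  have hδ' : 0 < δ' :=
    lt_min hδ₀ (lt_min one_pos (Real.rpow_pos_of_pos (by positivity) _))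
  have hδ'δ₀ : δ' ≤ δ₀ := min_le_left _ _
  have hδ'K : δ' ≤ (K'/(2*C₀))^(1/ε) :=
    le_trans (min_le_right _ _) (min_le_right _ _)
  clear_value δ'
  have h1 := claim δ' hδ' hδ'δ₀
  have hδ'ε : δ'^ε ≤ K'/(2*C₀) := by
    have h2 : δ' ≤ (K'/(2*C₀))^(1/ε) := hδ'K
    calc δ'^ε ≤ ((K'/(2*C₀))^(1/ε))^ε := Real.rpow_le_rpow hδ'.le h2 hε.le
      _ = K'/(2*C₀) := rpow_one_div_pow (by positivity) hε
  -- rewrite the claim in terms of K'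
  have hsplit : (δ'/(8*L))^(1/κ) = δ'^(1/κ) / ((8*L)^(1/κ)) :=
    Real.div_rpow hδ'.le (by positivity) _
  have halpha : δ'^α = δ'^(1/κ) * δ'^ε := by
    rw [← Real.rpow_add hδ', hεdef]; congr 1; ring
  have hpow : (0:ℝ) < δ'^(1/κ) := Real.rpow_pos_of_pos hδ' _
  have h3 : K' * δ'^(1/κ) ≤ C₀ * δ'^ε * δ'^(1/κ) := by
    have := h1
    rw [hsplit, halpha] at this
    calc K' * δ'^(1/κ) = K * (δ'^(1/κ) / ((8*L)^(1/κ))) := by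
          rw [hK'def]; field_simp
      _ ≤ C₀ * (δ'^(1/κ) * δ'^ε) := this
      _ = C₀ * δ'^ε * δ'^(1/κ) := by ring
  have h4 : K' ≤ C₀ * δ'^ε := le_of_mul_le_mul_right h3 hpow
  have h5 : C₀ * δ'^ε ≤ K'/2 := by
    calc C₀ * δ'^ε ≤ C₀ * (K'/(2*C₀)) := by nlinarith [hδ'ε]
      _ = K'/2 := by field_simp
  linarith
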